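/- Let H be self-adjoint with Gibbs state σ_β, let A be a self-adjoint matrix, and let q: ℝ → ℂ satisfy q(−ν) = conj(q(ν)). Define L = Σ_{ν∈B_H} q(ν) e^{−βν/4} A_ν. Then L satisfies the KMS condition Δ_{σ_β}^{−1/2}(L) = L†, i.e., σ_β^{−1/2} L σ_β^{1/2} = L†. -/

import Mathlib

open Matrix
open scoped ComplexOrder

private lemma proj_sum_mul {n ι : Type*} [Fintype n] [DecidableEq n] [Fintype ι] [DecidableEq ι]
    (P : ι → Matrix n n ℂ) (hPorth : ∀ i j, P i * P j = if i = j then P i else 0)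
    (a b : ι → ℂ) :
    (∑ i, a i • P i) * (∑ i, b i • P i) = ∑ i, (a i * b i) • P i := by
  rw [Finset.sum_mul_sum]
  have : ∀ i j : ι, (a i • P i) * (b j • P j) =
      if i = j then (a i * b j) • P i else 0 := by
    intro i j
    rw [smul_mul_assoc, mul_smul_comm, smul_smul, hPorth, smul_ite, smul_zero]
  simp only [this, Finset.sum_ite_eq, Finset.mem_univ, if_true]

private lemma exp_proj {n ι : Type*} [Fintype n] [DecidableEq n] [Fintype ι] [DecidableEq ι]
    (P : ι → Matrix n n ℂ) (hPorth : ∀ i j, P i * P j = if i = j then P i else 0)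
    (hPsum : ∑ i, P i = 1) (c : ι → ℂ) :
    NormedSpace.exp (∑ i, c i • P i) = ∑ i, Complex.exp (c i) • P i := by
  have hpow : ∀ k : ℕ, (∑ i, c i • P i) ^ k = ∑ i, (c i ^ k) • P i := by
    intro k; induction k with
    | zero => simp [hPsum]
    | succ k ih =>
        rw [pow_succ, ih, proj_sum_mul P hPorth]
        simp [pow_succ]
  have hsummable : ∀ i : ι, Summable fun m : ℕ => ((m.factorial :ℂ)⁻¹ * c i ^ m) • P i := by
    intro i
    have := (NormedSpace.expSeries_summable' (𝕂 := ℂ) (c i))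
    simpa [smul_eq_mul] using this.smul_const (P i)
  rw [NormedSpace.exp_eq_tsum (𝕂 := ℂ)]
  simp only [hpow, Finset.smul_sum, smul_smul]
  rw [Summable.tsum_finsetSum (fun i _ => hsummable i)]
  refine Finset.sum_congr rfl fun i _ => ?_
  rw [Summable.tsum_smul_const]
  · congr 1
    rw [Complex.exp_eq_exp_ℂ, NormedSpace.exp_eq_tsum (𝕂 := ℂ)]
    simp [smul_eq_mul]
  · simpa [smul_eq_mul] using (NormedSpace.expSeries_summable' (𝕂 := ℂ) (c i))

private lemma trace_nonneg_of_psd {n : Type*} [Fintype n] [DecidableEq n]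
    {M : Matrix n n ℂ} (hM : M.PosSemidef) : 0 ≤ M.trace := by
  rw [Matrix.trace]
  refine Finset.sum_nonneg fun j _ => ?_
  exact hM.diag_nonneg

private lemma psd_smul_real {n : Type*} [Fintype n] {M : Matrix n n ℂ} (hM : M.PosSemidef)
    {c : ℝ} (hc : 0 ≤ c) : ((c : ℂ) • M).PosSemidef := by
  refine ⟨?_, fun x => ?_⟩
  · unfold Matrix.IsHermitian
    rw [conjTranspose_smul, hM.1.eq]
    congr 1
    simp [Complex.conj_ofReal]
  · exact (hM.smul (a := (c : ℂ)) (by exact_mod_cast Complex.zero_le_real.2 hc)).2 x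

/-- For `L = Σ_{ν ∈ B_H} q(ν) e^{−βν/4} A_ν` with `A` self-adjoint and
`q(−ν) = conj(q(ν))`, the KMS condition `σ_β^{−1/2} L σ_β^{1/2} = Lᴴ` holds. -/
theorem stmt_7 {N : ℕ} (ι : Type) [Fintype ι] [DecidableEq ι]
    (H : Matrix (Fin N) (Fin N) ℂ) (lam : ι → ℝ)
    (P : ι → Matrix (Fin N) (Fin N) ℂ)
    (hHerm : Hᴴ = H)
    (hPherm : ∀ i, (P i)ᴴ = P i)
    (hPorth : ∀ i j, P i * P j = if i = j then P i else 0)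
    (hPsum : ∑ i, P i = 1)
    (hH : H = ∑ i, (lam i : ℂ) • P i)
    (β : ℝ) (hβ : 0 < β)
    (σβ R : Matrix (Fin N) (Fin N) ℂ)
    (hσβ : σβ = ((NormedSpace.exp (-(β : ℂ) • H)).trace)⁻¹ •
      NormedSpace.exp (-(β : ℂ) • H))
    (hR : R.PosDef) (hR2 : R * R = σβ)
    (A : Matrix (Fin N) (Fin N) ℂ) (hA : Aᴴ = A)
    (q : ℝ → ℂ) (hq : ∀ ν : ℝ, q (-ν) = starRingEnd ℂ (q ν))
    (Aν : ℝ → Matrix (Fin N) (Fin N) ℂ)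
    (hAν : ∀ ν : ℝ, Aν ν =
      ∑ p ∈ Finset.univ.filter (fun p : ι × ι => lam p.1 - lam p.2 = ν),
        P p.1 * A * P p.2)
    (BH : Finset ℝ)
    (hBH : BH = Finset.univ.image (fun p : ι × ι => lam p.1 - lam p.2))
    (L : Matrix (Fin N) (Fin N) ℂ)
    (hL : L = ∑ ν ∈ BH, (q ν * Real.exp (-β * ν / 4)) • Aν ν) :
    R⁻¹ * L * R = Lᴴ := by
  rcases Nat.eq_zero_or_pos N with hN | hN
  · subst hN
    have : Subsingleton (Matrix (Fin 0) (Fin 0) ℂ) :=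
      ⟨fun a b => by ext i j; exact i.elim0⟩
    exact Subsingleton.elim _ _
  classical
  -- the exponential as a spectral sum
  have hexp : NormedSpace.exp (-(β:ℂ) • H) = ∑ i, ((Real.exp (-β * lam i) : ℝ) : ℂ) • P i := by
    have h1 : -(β:ℂ) • H = ∑ i, ((-β * lam i : ℝ) : ℂ) • P i := by
      rw [hH, Finset.smul_sum]
      refine Finset.sum_congr rfl fun i _ => ?_
      rw [smul_smul]; congr 1; push_cast; ring
    rw [h1, exp_proj P hPorth hPsum]
    refine Finset.sum_congr rfl fun i _ => ?_
    rw [Complex.ofReal_exp]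
  -- traces of the projections
  have hPpsd : ∀ i, (P i).PosSemidef := by
    intro i
    have h2 : P i = (P i)ᴴ * P i := by
      rw [hPherm]
      simpa using (hPorth i i).symm
    rw [h2]; exact Matrix.posSemidef_conjTranspose_mul_self _
  have hτc : ∀ i, (P i).trace = ((((P i).trace).re : ℝ) : ℂ) := by
    intro i
    have h0 := trace_nonneg_of_psd (hPpsd i)
    rw [Complex.le_def] at h0
    exact Complex.ext rfl (by simpa using h0.2.symm)
  set τ : ι → ℝ := fun i => ((P i).trace).re with hτ
  have hτnn : ∀ i, 0 ≤ τ i := by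
    intro i
    have h0 := trace_nonneg_of_psd (hPpsd i)
    rw [Complex.le_def] at h0
    simpa using h0.1
  have hτsum : ∑ i, τ i = (N : ℝ) := by
    have h1 : (∑ i, (P i).trace) = ((N : ℝ) : ℂ) := by
      rw [← Matrix.trace_sum, hPsum, Matrix.trace_one]
      simp
    have h2 : ((∑ i, τ i : ℝ) : ℂ) = ((N : ℝ) : ℂ) := by
      rw [← h1, Complex.ofReal_sum]
      exact Finset.sum_congr rfl fun i _ => (hτc i).symm
    exact_mod_cast h2
  set tR : ℝ := ∑ i, Real.exp (-β * lam i) * τ i with htRdef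
  have htRpos : 0 < tR := by
    have hex : ∃ i, 0 < τ i := by
      by_contra hcon
      push_neg at hcon
      have hz : ∀ i, τ i = 0 := fun i => le_antisymm (hcon i) (hτnn i)
      have : (0 : ℝ) = (N : ℝ) := by
        rw [← hτsum, Finset.sum_congr rfl fun i _ => hz i, Finset.sum_const, smul_zero]
      exact absurd this.symm (by positivity)
    obtain ⟨i0, hi0⟩ := hex
    exact Finset.sum_pos' (fun i _ => mul_nonneg (Real.exp_pos _).le (hτnn i))
      ⟨i0, Finset.mem_univ _, mul_pos (Real.exp_pos _) hi0⟩
  have htr : (NormedSpace.exp (-(β:ℂ) • H)).trace = ((tR : ℝ) : ℂ) := by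
    rw [hexp, Matrix.trace_sum, htRdef, Complex.ofReal_sum]
    refine Finset.sum_congr rfl fun i _ => ?_
    rw [Matrix.trace_smul, hτc i, smul_eq_mul]
    push_cast
    ring
  -- σβ as a spectral sum
  have hσ' : σβ = ∑ i, ((tR⁻¹ * Real.exp (-β * lam i) : ℝ) : ℂ) • P i := by
    rw [hσβ, htr, hexp, Finset.smul_sum]
    refine Finset.sum_congr rfl fun i _ => ?_
    rw [smul_smul]
    congr 1
    push_cast
    ring
  -- the explicit square root
  set s : ι → ℝ := fun i => Real.sqrt (tR⁻¹ * Real.exp (-β * lam i)) with hsdef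
  have hspos : ∀ i, 0 < s i := fun i =>
    Real.sqrt_pos.2 (mul_pos (inv_pos.2 htRpos) (Real.exp_pos _))
  set S : Matrix (Fin N) (Fin N) ℂ := ∑ i, ((s i : ℝ) : ℂ) • P i with hSdef
  have hSsq : S * S = σβ := by
    rw [hSdef, proj_sum_mul P hPorth, hσ']
    refine Finset.sum_congr rfl fun i _ => ?_
    congr 1
    rw [← Complex.ofReal_mul, Real.mul_self_sqrt (mul_pos (inv_pos.2 htRpos) (Real.exp_pos _)).le]
  have hSpsd : S.PosSemidef := by
    rw [hSdef]
    exact Finset.sum_induction _ _ (fun a b ha hb => ha.add hb) .zero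
      (fun i _ => psd_smul_real (hPpsd i) (hspos i).le)
  have hRS : R = S := by
    open scoped MatrixOrder in
    exact (CFC.sq_eq_sq_iff R S hR.posSemidef.nonneg hSpsd.nonneg).mp
      (by rw [pow_two, pow_two, hR2, hSsq])
  have hRinv : R⁻¹ = ∑ i, (((s i)⁻¹ : ℝ) : ℂ) • P i := by
    apply Matrix.inv_eq_right_inv
    rw [hRS, hSdef, proj_sum_mul P hPorth, ← hPsum]
    refine Finset.sum_congr rfl fun i _ => ?_
    rw [← Complex.ofReal_mul, mul_inv_cancel₀ (hspos i).ne', Complex.ofReal_one, one_smul]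
  -- sqrt values
  have hsval : ∀ k, s k = Real.sqrt tR⁻¹ * Real.exp (-β * lam k / 2) := by
    intro k
    rw [hsdef]
    simp only
    rw [Real.sqrt_mul (inv_nonneg.2 htRpos.le), ← Real.exp_half]
  have hcoef : ∀ i j : ι, (s i)⁻¹ * s j = Real.exp (β * (lam i - lam j) / 2) := by
    intro i j
    have ha : Real.sqrt tR⁻¹ ≠ 0 := ne_of_gt (Real.sqrt_pos.2 (inv_pos.2 htRpos))
    rw [hsval, hsval, inv_mul_eq_div, mul_div_mul_left _ _ ha, ← Real.exp_sub]
    congr 1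
    ring
  -- conjugation of a single block
  have key : ∀ i j : ι, R⁻¹ * (P i * A * P j) * R =
      ((Real.exp (β * (lam i - lam j) / 2) : ℝ) : ℂ) • (P i * A * P j) := by
    intro i j
    have hPl : ∀ k, P k * (P i * A * P j) = if k = i then P i * A * P j else 0 := by
      intro k
      rw [show P k * (P i * A * P j) = P k * P i * A * P j by
        rw [mul_assoc (P k * P i), mul_assoc, mul_assoc], hPorth]
      split_ifs with h
      · subst h; rfl
      · simp
    have hPr : ∀ k, (P i * A * P j) * P k = if j = k then P i * A * P j else 0 := by
      intro k
      rw [mul_assoc, hPorth]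
      split_ifs with h
      · subst h; rfl
      · simp
    have h1 : R⁻¹ * (P i * A * P j) = (((s i)⁻¹ : ℝ) : ℂ) • (P i * A * P j) := by
      rw [hRinv, Finset.sum_mul]
      simp only [smul_mul_assoc, hPl, smul_ite, smul_zero]
      simp
    have h2 : (P i * A * P j) * S = ((s j : ℝ) : ℂ) • (P i * A * P j) := by
      rw [hSdef, Finset.mul_sum]
      simp only [mul_smul_comm, hPr, smul_ite, smul_zero]
      simp
    rw [hRS] at *
    rw [mul_assoc]
    rw [h2, mul_smul_comm, h1, smul_smul, ← Complex.ofReal_mul]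
    congr 2
    rw [mul_comm]
    exact hcoef i j
  -- the final sum over pairs
  have hL' : L = ∑ p : ι × ι,
      (q (lam p.1 - lam p.2) * Real.exp (-β * (lam p.1 - lam p.2) / 4)) •
        (P p.1 * A * P p.2) := by
    rw [hL, ← Finset.sum_fiberwise_of_maps_to (g := fun p : ι × ι => lam p.1 - lam p.2)
      (t := BH) (fun p _ => by rw [hBH]; exact Finset.mem_image_of_mem _ (Finset.mem_univ p))]
    refine Finset.sum_congr rfl fun ν hν => ?_
    rw [hAν, Finset.smul_sum]
    refine Finset.sum_congr rfl fun p hp => ?_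
    have hgp : lam p.1 - lam p.2 = ν := (Finset.mem_filter.mp hp).2
    rw [hgp]
  have hLHS : R⁻¹ * L * R = ∑ p : ι × ι,
      (q (lam p.1 - lam p.2) * Real.exp (β * (lam p.1 - lam p.2) / 4)) •
        (P p.1 * A * P p.2) := by
    rw [hL', Finset.mul_sum, Finset.sum_mul]
    refine Finset.sum_congr rfl fun p _ => ?_
    rw [mul_smul_comm, smul_mul_assoc, key, smul_smul]
    congr 1
    rw [mul_assoc, ← Complex.ofReal_mul, ← Real.exp_add]
    congr 2
    ring
  have hRHS : Lᴴ = ∑ p : ι × ι,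
      (q (lam p.1 - lam p.2) * Real.exp (β * (lam p.1 - lam p.2) / 4)) •
        (P p.1 * A * P p.2) := by
    rw [hL', conjTranspose_sum]
    rw [← Equiv.sum_comp (Equiv.prodComm ι ι)
      (fun p : ι × ι => (q (lam p.1 - lam p.2) * Real.exp (β * (lam p.1 - lam p.2) / 4)) •
        (P p.1 * A * P p.2))]
    refine Finset.sum_congr rfl fun p _ => ?_
    rw [conjTranspose_smul, conjTranspose_mul, conjTranspose_mul, hA, hPherm, hPherm]
    simp only [Equiv.prodComm_apply, Prod.fst_swap, Prod.snd_swap]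
    rw [← mul_assoc]
    congr 1
    rw [Complex.star_def, _root_.map_mul, Complex.conj_ofReal,
      show lam p.1 - lam p.2 = -(lam p.2 - lam p.1) by ring, hq, Complex.conj_conj]
    congr 2
    ring
  rw [hLHS, hRHS]
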